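/- Let u be a 1-cocycle on Γ in Aut_S(g(S)). Then g(S)_u is an R-subalgebra of g(S), every element of g(S) can be written uniquely in the form Σ_{i=0}^{m-1} z^i y_i with y_0, …, y_{m-1} ∈ g(S)_u, and consequently the S-linear map S ⊗_R g(S)_u → g(S) determined by s ⊗ y ↦ s·y is an isomorphism of Lie algebras over S; that is, g(S)_u is an S/R form of g(R) := g ⊗_k R. -/

import Mathlib

open scoped TensorProduct
open LaurentPolynomial

set_option maxHeartbeats 1000000
set_option synthInstance.maxHeartbeats 400000

noncomputable section

namespace LoopPaper

variable {k : Type*} [Field k] {g : Type*} [LieRing g] [LieAlgebra k g]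

/-- A linear automorphism of a Lie algebra is a Lie algebra automorphism if it
preserves brackets. -/
def IsLieAut (σ : g ≃ₗ[k] g) : Prop := ∀ x y : g, σ ⁅x, y⁆ = ⁅σ x, σ y⁆

theorem IsLieAut.one : IsLieAut (1 : g ≃ₗ[k] g) := fun _ _ => rfl

theorem IsLieAut.mul {σ τ : g ≃ₗ[k] g} (hσ : IsLieAut σ) (hτ : IsLieAut τ) :
    IsLieAut (σ * τ) := fun x y => by
  show σ (τ ⁅x, y⁆) = ⁅σ (τ x), σ (τ y)⁆
  rw [hτ, hσ]

theorem IsLieAut.inv {σ : g ≃ₗ[k] g} (hσ : IsLieAut σ) : IsLieAut σ⁻¹ := fun x y => by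
  apply σ.injective
  have h1 : ∀ z, σ (σ⁻¹ z) = z := fun z => σ.apply_symm_apply z
  rw [h1, hσ, h1, h1]

/-! ### The variable-scaling automorphism `z ↦ c z` of `k[z,z⁻¹]` -/

/-- The unit `c^n • z^n` of the Laurent polynomial ring. -/
def scaleUnit (c : kˣ) (n : ℤ) : (LaurentPolynomial k)ˣ where
  val := ((c ^ n : kˣ) : k) • T n
  inv := ((c ^ (-n) : kˣ) : k) • T (-n)
  val_inv := by
    rw [smul_mul_smul_comm, ← T_add, ← Units.val_mul, ← zpow_add, add_neg_cancel, zpow_zero,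
      Units.val_one, T_zero, one_smul]
  inv_val := by
    rw [smul_mul_smul_comm, ← T_add, ← Units.val_mul, ← zpow_add, neg_add_cancel, zpow_zero,
      Units.val_one, T_zero, one_smul]

/-- The homomorphism `n ↦ c^n • z^n` from `ℤ` to the units of `k[z,z⁻¹]`. -/
def scaleUnitHom (c : kˣ) : Multiplicative ℤ →* (LaurentPolynomial k)ˣ where
  toFun n := scaleUnit c n.toAdd
  map_one' := Units.ext (by
    show ((c ^ (0 : ℤ) : kˣ) : k) • T (0 : ℤ) = 1
    rw [zpow_zero, Units.val_one, T_zero, one_smul])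
  map_mul' a b := Units.ext (by
    show ((c ^ (a.toAdd + b.toAdd) : kˣ) : k) • T (a.toAdd + b.toAdd) =
      (((c ^ a.toAdd : kˣ) : k) • T a.toAdd) * (((c ^ b.toAdd : kˣ) : k) • T b.toAdd)
    rw [smul_mul_smul_comm, ← T_add, ← Units.val_mul, ← zpow_add])

/-- The `k`-algebra endomorphism of `k[z,z⁻¹]` with `z ↦ c z`. -/
def scaleVar (c : kˣ) : LaurentPolynomial k →ₐ[k] LaurentPolynomial k :=
  AddMonoidAlgebra.lift k _ ℤ ((Units.coeHom _).comp (scaleUnitHom c))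

theorem scaleVar_T (c : kˣ) (n : ℤ) : scaleVar c (T n) = ((c ^ n : kˣ) : k) • T n := by
  have h : (T n : LaurentPolynomial k) = AddMonoidAlgebra.of k ℤ (Multiplicative.ofAdd n) := rfl
  rw [h, scaleVar, AddMonoidAlgebra.lift_of]
  rfl

theorem scaleVar_comp (c d : kˣ) :
    (scaleVar c).comp (scaleVar d) = scaleVar (k := k) (c * d) := by
  refine AddMonoidAlgebra.algHom_ext ?_ (Subsingleton.elim _ _)
  intro n
  have hT : (AddMonoidAlgebra.single n 1 : LaurentPolynomial k) = T n := rfl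
  simp only [AlgHom.coe_comp, Function.comp_apply, hT]
  rw [scaleVar_T, map_smul, scaleVar_T, smul_smul, scaleVar_T]
  congr 1
  rw [mul_zpow, Units.val_mul, mul_comm]

theorem scaleVar_id : scaleVar (1 : kˣ) = AlgHom.id k (LaurentPolynomial k) := by
  refine AddMonoidAlgebra.algHom_ext ?_ (Subsingleton.elim _ _)
  intro n
  have hT : (AddMonoidAlgebra.single n 1 : LaurentPolynomial k) = T n := rfl
  simp only [hT, AlgHom.coe_id, id_eq]
  rw [scaleVar_T, one_zpow, Units.val_one, one_smul]

/-- The `k`-algebra automorphism of `k[z,z⁻¹]` with `z ↦ c z`. -/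
def scaleVarEquiv (c : kˣ) : LaurentPolynomial k ≃ₐ[k] LaurentPolynomial k :=
  AlgEquiv.ofAlgHom (scaleVar c) (scaleVar c⁻¹)
    (by rw [scaleVar_comp, mul_inv_cancel, scaleVar_id])
    (by rw [scaleVar_comp, inv_mul_cancel, scaleVar_id])

theorem scaleVarEquiv_apply (c : kˣ) (p : LaurentPolynomial k) :
    scaleVarEquiv c p = scaleVar c p := rfl


/-- `R = k[t,t⁻¹]`, identified with the `k`-subalgebra of `S = k[z,z⁻¹]` generated by
`t = z^m` and `t⁻¹ = z^{-m}`. -/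
def Rsub (k : Type*) [Field k] (m : ℕ) : Subalgebra k (LaurentPolynomial k) :=
  Algebra.adjoin k {T (m : ℤ), T (-(m : ℤ))}

/-- `g(S) = g ⊗_k S` is a Lie algebra over `k` (by restriction from `S`). -/
instance instLieAlgebraTensorBase : LieAlgebra k (LaurentPolynomial k ⊗[k] g) where
  lie_smul c x y := by
    have h := lie_smul (algebraMap k (LaurentPolynomial k) c) x y
    rwa [algebraMap_smul, algebraMap_smul] at h

/-- The underlying submodule `⊕_{i ∈ ℤ} g_ī ⊗ z^i` of the loop algebra. -/
def loopCarrier (ζ : k) (σ : g ≃ₗ[k] g) : Submodule k (LaurentPolynomial k ⊗[k] g) :=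
  Submodule.span k {p | ∃ (i : ℤ) (x : g), σ x = ζ ^ i • x ∧ p = T i ⊗ₜ[k] x}

theorem loop_lie_mem {ζ : k} (hζ0 : ζ ≠ 0) {σ : g ≃ₗ[k] g} (hbr : IsLieAut σ)
    {x y : LaurentPolynomial k ⊗[k] g} (hx : x ∈ loopCarrier ζ σ) (hy : y ∈ loopCarrier ζ σ) :
    ⁅x, y⁆ ∈ loopCarrier ζ σ := by
  have key : ∀ p ∈ {p : LaurentPolynomial k ⊗[k] g |
      ∃ (i : ℤ) (x : g), σ x = ζ ^ i • x ∧ p = T i ⊗ₜ[k] x},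
      ∀ q, q ∈ loopCarrier ζ σ → ⁅p, q⁆ ∈ loopCarrier ζ σ := by
    rintro p ⟨i, a, ha, rfl⟩ q hq
    unfold loopCarrier at hq ⊢
    induction hq using Submodule.span_induction with
    | mem q hq =>
      obtain ⟨j, b, hb, rfl⟩ := hq
      rw [LieAlgebra.ExtendScalars.bracket_tmul, ← T_add]
      refine Submodule.subset_span ⟨i + j, ⁅a, b⁆, ?_, rfl⟩
      rw [hbr, ha, hb, smul_lie, lie_smul, smul_smul, ← zpow_add₀ hζ0]
    | zero =>
      have h0 : ⁅(T i ⊗ₜ[k] a : LaurentPolynomial k ⊗[k] g), (0 : LaurentPolynomial k ⊗[k] g)⁆ = 0 :=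
        lie_zero (T i ⊗ₜ[k] a : LaurentPolynomial k ⊗[k] g)
      rw [h0]; exact zero_mem _
    | add q r _ _ hq hr =>
      have h0 : ⁅(T i ⊗ₜ[k] a : LaurentPolynomial k ⊗[k] g), q + r⁆ = ⁅T i ⊗ₜ[k] a, q⁆ + ⁅T i ⊗ₜ[k] a, r⁆ :=
        lie_add (T i ⊗ₜ[k] a : LaurentPolynomial k ⊗[k] g) q r
      rw [h0]; exact add_mem hq hr
    | smul c q _ hq =>
      have h0 : ⁅(T i ⊗ₜ[k] a : LaurentPolynomial k ⊗[k] g), c • q⁆ = c • ⁅T i ⊗ₜ[k] a, q⁆ :=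
        lie_smul c (T i ⊗ₜ[k] a : LaurentPolynomial k ⊗[k] g) q
      rw [h0]; exact Submodule.smul_mem _ _ hq
  unfold loopCarrier at hx
  induction hx using Submodule.span_induction with
  | mem p hp => exact key p hp y hy
  | zero =>
    have h0 : ⁅(0 : LaurentPolynomial k ⊗[k] g), y⁆ = 0 := zero_lie y
    rw [h0]; exact zero_mem _
  | add p r _ _ hp hr =>
    have h0 : ⁅p + r, y⁆ = ⁅p, y⁆ + ⁅r, y⁆ := add_lie p r y
    rw [h0]; exact add_mem hp hr
  | smul c p _ hp =>
    have h0 : ⁅c • p, y⁆ = c • ⁅p, y⁆ := smul_lie c p y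
    rw [h0]; exact Submodule.smul_mem _ _ hp

/-- The loop algebra `L(g,σ) = ⊕_{i ∈ ℤ} g_ī ⊗ z^i`, a Lie subalgebra (over `k`)
of `g(S) = g ⊗_k S`.  Here `m` is a period of `σ` and `ζ` is the chosen root of unity. -/
def loopAlgebra (m : ℕ) (ζ : k) (hζ0 : ζ ≠ 0) (hζm : ζ ^ m = 1) (σ : g ≃ₗ[k] g)
    (hbr : IsLieAut σ) (hσ : σ ^ m = 1) : LieSubalgebra k (LaurentPolynomial k ⊗[k] g) where
  __ := loopCarrier ζ σ
  lie_mem' := fun hx hy => loop_lie_mem hζ0 hbr hx hy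

theorem mem_loopAlgebra_iff {m : ℕ} {ζ : k} {hζ0 : ζ ≠ 0} {hζm : ζ ^ m = 1} {σ : g ≃ₗ[k] g}
    {hbr : IsLieAut σ} {hσ : σ ^ m = 1} {x : LaurentPolynomial k ⊗[k] g} :
    x ∈ loopAlgebra m ζ hζ0 hζm σ hbr hσ ↔ x ∈ loopCarrier ζ σ := Iff.rfl

theorem T_smul_loop {ζ : k} (hζ0 : ζ ≠ 0) {σ : g ≃ₗ[k] g} {j : ℤ} (hj : ζ ^ j = 1)
    {x : LaurentPolynomial k ⊗[k] g} (hx : x ∈ loopCarrier ζ σ) :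
    (T j : LaurentPolynomial k) • x ∈ loopCarrier ζ σ := by
  unfold loopCarrier at hx ⊢
  induction hx using Submodule.span_induction with
  | mem p hp =>
    obtain ⟨i, a, ha, rfl⟩ := hp
    rw [TensorProduct.smul_tmul', smul_eq_mul, ← T_add]
    refine Submodule.subset_span ⟨j + i, a, ?_, rfl⟩
    rw [ha, zpow_add₀ hζ0, hj, one_mul]
  | zero => rw [smul_zero]; exact zero_mem _
  | add p q _ _ hp hq => rw [smul_add]; exact add_mem hp hq
  | smul c p _ hp =>
    rw [smul_comm]
    exact Submodule.smul_mem _ _ hp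

theorem Rsub_smul_loop {m : ℕ} {ζ : k} (hζ0 : ζ ≠ 0) (hζm : ζ ^ m = 1) {σ : g ≃ₗ[k] g}
    {r : LaurentPolynomial k} (hr : r ∈ Rsub k m) :
    ∀ x ∈ loopCarrier ζ σ, r • x ∈ loopCarrier (g := g) ζ σ := by
  induction hr using Algebra.adjoin_induction with
  | mem s hs =>
    intro x hx
    rcases hs with rfl | rfl
    · refine T_smul_loop hζ0 ?_ hx
      rw [zpow_natCast, hζm]
    · refine T_smul_loop hζ0 ?_ hx
      rw [zpow_neg, zpow_natCast, hζm, inv_one]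
  | algebraMap c =>
    intro x hx
    rw [algebraMap_smul]
    exact Submodule.smul_mem _ _ hx
  | add r s _ _ hr hs =>
    intro x hx
    rw [add_smul]
    exact add_mem (hr x hx) (hs x hx)
  | mul r s _ _ hr hs =>
    intro x hx
    rw [mul_smul]
    exact hr _ (hs x hx)


/-- The action of `R` on the loop algebra. -/
instance loopSMulR {m : ℕ} {ζ : k} {hζ0 : ζ ≠ 0} {hζm : ζ ^ m = 1} {σ : g ≃ₗ[k] g}
    {hbr : IsLieAut σ} {hσ : σ ^ m = 1} :
    SMul ↥(Rsub k m) ↥(loopAlgebra m ζ hζ0 hζm σ hbr hσ) where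
  smul r x := ⟨(r : LaurentPolynomial k) • (x : LaurentPolynomial k ⊗[k] g),
    Rsub_smul_loop hζ0 hζm r.2 _ x.2⟩

theorem loop_smul_coe {m : ℕ} {ζ : k} {hζ0 : ζ ≠ 0} {hζm : ζ ^ m = 1} {σ : g ≃ₗ[k] g}
    {hbr : IsLieAut σ} {hσ : σ ^ m = 1} (r : ↥(Rsub k m))
    (x : ↥(loopAlgebra m ζ hζ0 hζm σ hbr hσ)) :
    ((r • x : ↥(loopAlgebra m ζ hζ0 hζm σ hbr hσ)) : LaurentPolynomial k ⊗[k] g)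
      = (r : LaurentPolynomial k) • (x : LaurentPolynomial k ⊗[k] g) := rfl

/-- The loop algebra is a module over `R = k[t,t⁻¹] ⊆ k[z,z⁻¹]`. -/
instance loopModuleR {m : ℕ} {ζ : k} {hζ0 : ζ ≠ 0} {hζm : ζ ^ m = 1} {σ : g ≃ₗ[k] g}
    {hbr : IsLieAut σ} {hσ : σ ^ m = 1} :
    Module ↥(Rsub k m) ↥(loopAlgebra m ζ hζ0 hζm σ hbr hσ) where
  one_smul x := Subtype.ext (by simp [loop_smul_coe])
  mul_smul r s x := Subtype.ext (by simp [loop_smul_coe, mul_smul])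
  smul_zero r := Subtype.ext (by simp [loop_smul_coe])
  smul_add r x y := Subtype.ext (by simp [loop_smul_coe, smul_add])
  add_smul r s x := Subtype.ext (by simp [loop_smul_coe, add_smul])
  zero_smul x := Subtype.ext (by simp [loop_smul_coe])


/-- The inclusion of the loop algebra in `g(S)`, as an `R`-linear map. -/
def loopIncl (m : ℕ) (ζ : k) (hζ0 : ζ ≠ 0) (hζm : ζ ^ m = 1) (σ : g ≃ₗ[k] g)
    (hbr : IsLieAut σ) (hσ : σ ^ m = 1) :
    ↥(loopAlgebra m ζ hζ0 hζm σ hbr hσ) →ₗ[↥(Rsub k m)] (LaurentPolynomial k ⊗[k] g) where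
  toFun x := ↑x
  map_add' _ _ := rfl
  map_smul' _ _ := rfl

/-- The eigenspace `{x ∈ g : σ(x) = c x}`. -/
def eigSpace (σ : g ≃ₗ[k] g) (c : k) : Submodule k g where
  carrier := {x | σ x = c • x}
  add_mem' := by
    intro x y hx hy
    show σ (x + y) = c • (x + y)
    rw [map_add, hx, hy, smul_add]
  zero_mem' := by
    show σ 0 = c • (0 : g)
    rw [map_zero, smul_zero]
  smul_mem' := by
    intro t x hx
    show σ (t • x) = c • t • x
    rw [map_smul, hx, smul_comm]

/-- The `R`-algebra automorphism `id ⊗ ι_i` of `g(S)`, where `ι_i(z) = ζ^i z`. -/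
def idTensorIota (ζ : k) (hζ0 : ζ ≠ 0) (i : ℤ) :
    (LaurentPolynomial k ⊗[k] g) ≃ₗ[k] (LaurentPolynomial k ⊗[k] g) :=
  TensorProduct.congr (scaleVarEquiv (Units.mk0 ζ hζ0 ^ i)).toLinearEquiv (LinearEquiv.refl k g)

/-- A `k`-linear automorphism of `g(S)` lies in `Aut_S(g(S))` if it is `S`-linear and
preserves brackets. -/
def IsSAut (f : (LaurentPolynomial k ⊗[k] g) ≃ₗ[k] (LaurentPolynomial k ⊗[k] g)) : Prop :=
  (∀ (s : LaurentPolynomial k) (x : LaurentPolynomial k ⊗[k] g), f (s • x) = s • f x) ∧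
    ∀ x y : LaurentPolynomial k ⊗[k] g, f ⁅x, y⁆ = ⁅f x, f y⁆

/-- The action of `ī ∈ Γ = ℤ/mℤ` on `Aut_S(g(S))`:  `ⁱτ = (id ⊗ ι_i) ∘ τ ∘ (id ⊗ ι_i)⁻¹`. -/
def gammaAct (ζ : k) (hζ0 : ζ ≠ 0) (i : ℤ)
    (τ : (LaurentPolynomial k ⊗[k] g) ≃ₗ[k] (LaurentPolynomial k ⊗[k] g)) :
    (LaurentPolynomial k ⊗[k] g) ≃ₗ[k] (LaurentPolynomial k ⊗[k] g) :=
  ((idTensorIota (g := g) ζ hζ0 i).symm.trans τ).trans (idTensorIota ζ hζ0 i)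

/-- A family `u_ī`, `ī ∈ Γ = ℤ/mℤ` (presented as a function on integer representatives),
is a 1-cocycle on `Γ` in `Aut_S(g(S))` if each `u_i` is an `S`-algebra automorphism,
`u_i` depends only on `i` mod `m`, and `u_{i+j} = u_i ∘ ⁱ(u_j)`. -/
def IsCocycle (m : ℕ) (ζ : k) (hζ0 : ζ ≠ 0)
    (u : ℤ → ((LaurentPolynomial k ⊗[k] g) ≃ₗ[k] (LaurentPolynomial k ⊗[k] g))) : Prop :=
  (∀ i : ℤ, IsSAut (u i)) ∧ (∀ i j : ℤ, (i : ZMod m) = (j : ZMod m) → u i = u j) ∧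
    ∀ i j : ℤ, u (i + j) = (gammaAct ζ hζ0 i (u j)).trans (u i)

/-- The fixed point set `g(S)_u = {x : (u_ī ∘ (id ⊗ ι_i)) x = x for all ī}` of a 1-cocycle. -/
def cocycleFixed (ζ : k) (hζ0 : ζ ≠ 0)
    (u : ℤ → ((LaurentPolynomial k ⊗[k] g) ≃ₗ[k] (LaurentPolynomial k ⊗[k] g))) :
    Set (LaurentPolynomial k ⊗[k] g) :=
  {x | ∀ i : ℤ, u i (idTensorIota ζ hζ0 i x) = x}


section Aux

variable {k : Type*} [Field k] {g : Type*} [LieRing g] [LieAlgebra k g]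

theorem iota_tmul (ζ : k) (hζ0 : ζ ≠ 0) (i : ℤ) (s : LaurentPolynomial k) (x : g) :
    idTensorIota (g := g) ζ hζ0 i (s ⊗ₜ[k] x) = scaleVarEquiv (Units.mk0 ζ hζ0 ^ i) s ⊗ₜ[k] x := rfl

theorem iota_smul (ζ : k) (hζ0 : ζ ≠ 0) (i : ℤ) (s : LaurentPolynomial k)
    (x : LaurentPolynomial k ⊗[k] g) :
    idTensorIota ζ hζ0 i (s • x)
      = scaleVarEquiv (Units.mk0 ζ hζ0 ^ i) s • idTensorIota ζ hζ0 i x := by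
  induction x using TensorProduct.induction_on with
  | zero => simp
  | tmul t y =>
    rw [TensorProduct.smul_tmul', smul_eq_mul, iota_tmul, iota_tmul,
      TensorProduct.smul_tmul', smul_eq_mul, map_mul]
  | add a b ha hb => rw [smul_add, map_add, ha, hb, map_add, smul_add]

theorem iota_bracket (ζ : k) (hζ0 : ζ ≠ 0) (i : ℤ) (x y : LaurentPolynomial k ⊗[k] g) :
    idTensorIota ζ hζ0 i ⁅x, y⁆ = ⁅idTensorIota ζ hζ0 i x, idTensorIota ζ hζ0 i y⁆ := by
  induction x using TensorProduct.induction_on with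
  | zero =>
    have h0 : ⁅(0 : LaurentPolynomial k ⊗[k] g), y⁆ = 0 := zero_lie y
    have h0' : ⁅(0 : LaurentPolynomial k ⊗[k] g), idTensorIota ζ hζ0 i y⁆ = 0 :=
      zero_lie (idTensorIota ζ hζ0 i y)
    rw [h0, map_zero, h0']
  | tmul s a =>
    induction y using TensorProduct.induction_on with
    | zero =>
      have h0 : ⁅(s ⊗ₜ[k] a : LaurentPolynomial k ⊗[k] g), (0 : LaurentPolynomial k ⊗[k] g)⁆ = 0 :=
        lie_zero (s ⊗ₜ[k] a : LaurentPolynomial k ⊗[k] g)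
      have h0' : ⁅idTensorIota ζ hζ0 i (s ⊗ₜ[k] a), (0 : LaurentPolynomial k ⊗[k] g)⁆ = 0 :=
        lie_zero (idTensorIota ζ hζ0 i (s ⊗ₜ[k] a))
      rw [h0, map_zero, h0']
    | tmul t b =>
      rw [LieAlgebra.ExtendScalars.bracket_tmul, iota_tmul, iota_tmul, iota_tmul,
        LieAlgebra.ExtendScalars.bracket_tmul, map_mul]
    | add p q hp hq =>
      have h1 : ⁅(s ⊗ₜ[k] a : LaurentPolynomial k ⊗[k] g), p + q⁆ = ⁅s ⊗ₜ[k] a, p⁆ + ⁅s ⊗ₜ[k] a, q⁆ :=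
        lie_add (s ⊗ₜ[k] a : LaurentPolynomial k ⊗[k] g) p q
      have h2 : ⁅idTensorIota ζ hζ0 i (s ⊗ₜ[k] a), idTensorIota ζ hζ0 i p + idTensorIota ζ hζ0 i q⁆
          = ⁅idTensorIota ζ hζ0 i (s ⊗ₜ[k] a), idTensorIota ζ hζ0 i p⁆
            + ⁅idTensorIota ζ hζ0 i (s ⊗ₜ[k] a), idTensorIota ζ hζ0 i q⁆ :=
        lie_add (idTensorIota ζ hζ0 i (s ⊗ₜ[k] a)) (idTensorIota ζ hζ0 i p) (idTensorIota ζ hζ0 i q)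
      rw [h1, map_add, hp, hq, map_add, h2]
  | add p q hp hq =>
    have h1 : ⁅p + q, y⁆ = ⁅p, y⁆ + ⁅q, y⁆ := add_lie p q y
    have h2 : ⁅idTensorIota ζ hζ0 i p + idTensorIota ζ hζ0 i q, idTensorIota ζ hζ0 i y⁆
        = ⁅idTensorIota ζ hζ0 i p, idTensorIota ζ hζ0 i y⁆
          + ⁅idTensorIota ζ hζ0 i q, idTensorIota ζ hζ0 i y⁆ :=
      add_lie (idTensorIota ζ hζ0 i p) (idTensorIota ζ hζ0 i q) (idTensorIota ζ hζ0 i y)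
    rw [h1, map_add, hp, hq, map_add, h2]

theorem scaleVarEquiv_comp_apply (c d : kˣ) (s : LaurentPolynomial k) :
    scaleVarEquiv c (scaleVarEquiv d s) = scaleVarEquiv (c * d) s := by
  rw [scaleVarEquiv_apply, scaleVarEquiv_apply, scaleVarEquiv_apply, ← scaleVar_comp]
  rfl

theorem scaleVarEquiv_one_apply (s : LaurentPolynomial k) :
    scaleVarEquiv (1 : kˣ) s = s := by
  rw [scaleVarEquiv_apply, scaleVar_id]; rfl

theorem iota_comp (ζ : k) (hζ0 : ζ ≠ 0) (i j : ℤ) (x : LaurentPolynomial k ⊗[k] g) :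
    idTensorIota ζ hζ0 i (idTensorIota ζ hζ0 j x) = idTensorIota ζ hζ0 (i + j) x := by
  induction x using TensorProduct.induction_on with
  | zero => simp
  | tmul t y => rw [iota_tmul, iota_tmul, iota_tmul, scaleVarEquiv_comp_apply, ← zpow_add]
  | add p q hp hq => rw [map_add, map_add, hp, hq, map_add]

theorem iota_zero (ζ : k) (hζ0 : ζ ≠ 0) (x : LaurentPolynomial k ⊗[k] g) :
    idTensorIota ζ hζ0 0 x = x := by
  induction x using TensorProduct.induction_on with
  | zero => simp
  | tmul t y => rw [iota_tmul, zpow_zero, scaleVarEquiv_one_apply]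
  | add p q hp hq => rw [map_add, hp, hq]

theorem unit_pow_m {m : ℕ} {ζ : k} (hζ0 : ζ ≠ 0) (hζm : ζ ^ m = 1) :
    (Units.mk0 ζ hζ0) ^ (m : ℤ) = 1 := by
  ext
  push_cast
  simpa using hζm

theorem unit_zpow_congr {m : ℕ} {ζ : k} (hζ0 : ζ ≠ 0) (hζm : ζ ^ m = 1)
    {i j : ℤ} (hij : (i : ZMod m) = (j : ZMod m)) :
    Units.mk0 ζ hζ0 ^ i = Units.mk0 ζ hζ0 ^ j := by
  have hd : (m : ℤ) ∣ i - j := by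
    rwa [← ZMod.intCast_zmod_eq_zero_iff_dvd, Int.cast_sub, sub_eq_zero]
  obtain ⟨q, hq⟩ := hd
  have hi : i = j + (m : ℤ) * q := by omega
  rw [hi, zpow_add, zpow_mul, unit_pow_m hζ0 hζm, one_zpow, mul_one]

theorem zeta_zpow_congr {m : ℕ} {ζ : k} (hζ0 : ζ ≠ 0) (hζm : ζ ^ m = 1)
    {i j : ℤ} (hij : (i : ZMod m) = (j : ZMod m)) : ζ ^ i = ζ ^ j := by
  have h := congrArg (fun w : kˣ => (w : k)) (unit_zpow_congr hζ0 hζm hij)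
  simpa using h

theorem iota_congr {m : ℕ} {ζ : k} (hζ0 : ζ ≠ 0) (hζm : ζ ^ m = 1)
    {i j : ℤ} (hij : (i : ZMod m) = (j : ZMod m)) (x : LaurentPolynomial k ⊗[k] g) :
    idTensorIota ζ hζ0 i x = idTensorIota ζ hζ0 j x := by
  unfold idTensorIota
  rw [unit_zpow_congr hζ0 hζm hij]

/-- The semilinear action `ρ_i = u_i ∘ (id ⊗ ι_i)` of `ℤ` on `g(S)`. -/
def rho (ζ : k) (hζ0 : ζ ≠ 0)
    (u : ℤ → ((LaurentPolynomial k ⊗[k] g) ≃ₗ[k] (LaurentPolynomial k ⊗[k] g))) (i : ℤ) :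
    (LaurentPolynomial k ⊗[k] g) ≃ₗ[k] (LaurentPolynomial k ⊗[k] g) :=
  (idTensorIota ζ hζ0 i).trans (u i)

theorem rho_apply (ζ : k) (hζ0 : ζ ≠ 0)
    (u : ℤ → ((LaurentPolynomial k ⊗[k] g) ≃ₗ[k] (LaurentPolynomial k ⊗[k] g))) (i : ℤ)
    (x : LaurentPolynomial k ⊗[k] g) :
    rho ζ hζ0 u i x = u i (idTensorIota ζ hζ0 i x) := rfl

theorem mem_fixed_iff {ζ : k} {hζ0 : ζ ≠ 0}
    {u : ℤ → ((LaurentPolynomial k ⊗[k] g) ≃ₗ[k] (LaurentPolynomial k ⊗[k] g))}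
    {x : LaurentPolynomial k ⊗[k] g} :
    x ∈ cocycleFixed ζ hζ0 u ↔ ∀ i : ℤ, rho ζ hζ0 u i x = x := Iff.rfl

variable {m : ℕ} {ζ : k} {hζ0 : ζ ≠ 0}
  {u : ℤ → ((LaurentPolynomial k ⊗[k] g) ≃ₗ[k] (LaurentPolynomial k ⊗[k] g))}

theorem u_zero_apply (hu : IsCocycle m ζ hζ0 u) (x : LaurentPolynomial k ⊗[k] g) :
    u 0 x = x := by
  have h := congrArg (fun e : (LaurentPolynomial k ⊗[k] g) ≃ₗ[k] (LaurentPolynomial k ⊗[k] g)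
    => e x) (hu.2.2 0 0)
  simp only [zero_add, LinearEquiv.trans_apply] at h
  have hsymm : (idTensorIota (g := g) ζ hζ0 0).symm x = x := by
    conv_rhs => rw [← (idTensorIota (g := g) ζ hζ0 0).apply_symm_apply x]
    rw [iota_zero]
  have hg : gammaAct ζ hζ0 0 (u 0) x = u 0 x := by
    show idTensorIota ζ hζ0 0 (u 0 ((idTensorIota ζ hζ0 0).symm x)) = u 0 x
    rw [hsymm, iota_zero]
  rw [hg] at h
  exact ((u 0).injective h).symm

theorem rho_zero (hu : IsCocycle m ζ hζ0 u) (x : LaurentPolynomial k ⊗[k] g) :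
    rho ζ hζ0 u 0 x = x := by
  rw [rho_apply, iota_zero, u_zero_apply hu]

theorem rho_add (hu : IsCocycle m ζ hζ0 u) (i j : ℤ) (x : LaurentPolynomial k ⊗[k] g) :
    rho ζ hζ0 u (i + j) x = rho ζ hζ0 u i (rho ζ hζ0 u j x) := by
  have h := congrArg (fun e : (LaurentPolynomial k ⊗[k] g) ≃ₗ[k] (LaurentPolynomial k ⊗[k] g)
    => e (idTensorIota ζ hζ0 (i + j) x)) (hu.2.2 i j)
  simp only [LinearEquiv.trans_apply] at h
  have hsymm : (idTensorIota (g := g) ζ hζ0 i).symm (idTensorIota ζ hζ0 (i + j) x)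
      = idTensorIota ζ hζ0 j x := by
    rw [LinearEquiv.symm_apply_eq, iota_comp]
  rw [rho_apply, h]
  show u i (idTensorIota ζ hζ0 i (u j ((idTensorIota ζ hζ0 i).symm
    (idTensorIota ζ hζ0 (i + j) x)))) = _
  rw [hsymm]
  rfl

theorem rho_congr (hu : IsCocycle m ζ hζ0 u) (hζm : ζ ^ m = 1) {i j : ℤ}
    (hij : (i : ZMod m) = (j : ZMod m)) (x : LaurentPolynomial k ⊗[k] g) :
    rho ζ hζ0 u i x = rho ζ hζ0 u j x := by
  rw [rho_apply, rho_apply, hu.2.1 i j hij, iota_congr hζ0 hζm hij]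

theorem rho_smul (hu : IsCocycle m ζ hζ0 u) (i : ℤ) (s : LaurentPolynomial k)
    (x : LaurentPolynomial k ⊗[k] g) :
    rho ζ hζ0 u i (s • x) = scaleVarEquiv (Units.mk0 ζ hζ0 ^ i) s • rho ζ hζ0 u i x := by
  rw [rho_apply, iota_smul, (hu.1 i).1, rho_apply]

theorem rho_bracket (hu : IsCocycle m ζ hζ0 u) (i : ℤ) (x y : LaurentPolynomial k ⊗[k] g) :
    rho ζ hζ0 u i ⁅x, y⁆ = ⁅rho ζ hζ0 u i x, rho ζ hζ0 u i y⁆ := by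
  rw [rho_apply, iota_bracket, (hu.1 i).2, rho_apply, rho_apply]

theorem scaleVarEquiv_T (c : kˣ) (n : ℤ) :
    scaleVarEquiv c (T n) = ((c ^ n : kˣ) : k) • T n := by
  rw [scaleVarEquiv_apply, scaleVar_T]

theorem rho_T_smul (hu : IsCocycle m ζ hζ0 u) (i n : ℤ) (x : LaurentPolynomial k ⊗[k] g) :
    rho ζ hζ0 u i ((T n : LaurentPolynomial k) • x)
      = ζ ^ (i * n) • ((T n : LaurentPolynomial k) • rho ζ hζ0 u i x) := by
  rw [rho_smul hu, scaleVarEquiv_T, ← zpow_mul, smul_assoc]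
  congr 1
  simp

theorem scaleVarEquiv_fix_R (hζ0 : ζ ≠ 0) (hζm : ζ ^ m = 1) (i : ℤ)
    {r : LaurentPolynomial k} (hr : r ∈ Rsub k m) :
    scaleVarEquiv (Units.mk0 ζ hζ0 ^ i) r = r := by
  have hc : ((Units.mk0 ζ hζ0 ^ i) ^ (m : ℤ)) = 1 := by
    rw [← zpow_mul, mul_comm, zpow_mul, unit_pow_m hζ0 hζm, one_zpow]
  induction hr using Algebra.adjoin_induction with
  | mem s hs =>
    rcases hs with rfl | rfl
    · rw [scaleVarEquiv_T, hc, Units.val_one, one_smul]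
    · rw [scaleVarEquiv_T, zpow_neg, hc, inv_one, Units.val_one, one_smul]
  | algebraMap c => exact (scaleVarEquiv _).commutes c
  | add r s hr hs hr' hs' => rw [map_add, hr', hs']
  | mul r s hr hs hr' hs' => rw [map_mul, hr', hs']

theorem rho_R_smul (hu : IsCocycle m ζ hζ0 u) (hζm : ζ ^ m = 1) (i : ℤ)
    {r : LaurentPolynomial k} (hr : r ∈ Rsub k m) (x : LaurentPolynomial k ⊗[k] g) :
    rho ζ hζ0 u i (r • x) = r • rho ζ hζ0 u i x := by
  rw [rho_smul hu, scaleVarEquiv_fix_R hζ0 hζm i hr]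

end Aux
section Aux2

variable {k : Type*} [Field k] {g : Type*} [LieRing g] [LieAlgebra k g]

theorem geom_zero {m : ℕ} {w : k} (hw : w ^ m = 1) (hw1 : w ≠ 1) :
    ∑ i ∈ Finset.range m, w ^ i = 0 := by
  rw [geom_sum_eq hw1, hw, sub_self, zero_div]

theorem sum_shift {M : Type*} [AddCommMonoid M] {m : ℕ} (hm : 0 < m) (f : ℤ → M)
    (hf : ∀ n n' : ℤ, (n : ZMod m) = (n' : ZMod m) → f n = f n') (a : ℤ) :
    ∑ i ∈ Finset.range m, f (a + i) = ∑ i ∈ Finset.range m, f i := by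
  haveI : NeZero m := ⟨hm.ne'⟩
  have key : ∀ b : ℤ, ∑ i ∈ Finset.range m, f (b + i) = ∑ x : ZMod m, f x.val := by
    intro b
    refine Finset.sum_nbij' (i := fun i : ℕ => ((b + i : ℤ) : ZMod m))
      (j := fun x : ZMod m => (x - (b : ZMod m)).val) ?_ ?_ ?_ ?_ ?_
    · intro i _; exact Finset.mem_univ _
    · intro x _
      exact Finset.mem_range.2 (ZMod.val_lt _)
    · intro i hi
      show (((b + (i : ℤ) : ℤ) : ZMod m) - (b : ZMod m)).val = i
      have h1 : ((b + i : ℤ) : ZMod m) - (b : ZMod m) = ((i : ℕ) : ZMod m) := by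
        push_cast; ring
      rw [h1, ZMod.val_cast_of_lt (Finset.mem_range.1 hi)]
    · intro x _
      show ((b + (((x - (b : ZMod m)).val : ℕ) : ℤ) : ℤ) : ZMod m) = x
      push_cast
      rw [ZMod.natCast_val, ZMod.cast_id]
      ring
    · intro i _
      refine hf _ _ ?_
      show ((b + i : ℤ) : ZMod m) = (((((b + i : ℤ) : ZMod m)).val : ℤ) : ZMod m)
      rw [Int.cast_natCast, ZMod.natCast_val, ZMod.cast_id]
  rw [key a]
  have h0 := key 0
  simp only [zero_add] at h0
  rw [h0]

end Aux2
section Aux3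

variable {k : Type*} [Field k] {g : Type*} [LieRing g] [LieAlgebra k g]
variable {m : ℕ} {ζ : k} {hζ0 : ζ ≠ 0}
  {u : ℤ → ((LaurentPolynomial k ⊗[k] g) ≃ₗ[k] (LaurentPolynomial k ⊗[k] g))}

/-- The `j`-th "Fourier component" projection associated with the semilinear action `ρ`. -/
def Qc (m : ℕ) (ζ : k) (hζ0 : ζ ≠ 0)
    (u : ℤ → ((LaurentPolynomial k ⊗[k] g) ≃ₗ[k] (LaurentPolynomial k ⊗[k] g)))
    (j : ℤ) (x : LaurentPolynomial k ⊗[k] g) : LaurentPolynomial k ⊗[k] g :=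
  (m : k)⁻¹ • ∑ i ∈ Finset.range m, ζ ^ (-(i : ℤ) * j) • rho ζ hζ0 u i x

theorem Qc_def (j : ℤ) (x : LaurentPolynomial k ⊗[k] g) :
    Qc m ζ hζ0 u j x
      = (m : k)⁻¹ • ∑ i ∈ Finset.range m, ζ ^ (-(i : ℤ) * j) • rho ζ hζ0 u i x := rfl

theorem rho_Qc (hm : 0 < m) (hζm : ζ ^ m = 1) (hu : IsCocycle m ζ hζ0 u) (a j : ℤ)
    (x : LaurentPolynomial k ⊗[k] g) :
    rho ζ hζ0 u a (Qc m ζ hζ0 u j x) = ζ ^ (a * j) • Qc m ζ hζ0 u j x := by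
  set f : ℤ → LaurentPolynomial k ⊗[k] g :=
    fun n => ζ ^ (-n * j) • rho ζ hζ0 u n x with hf
  have hper : ∀ n n' : ℤ, (n : ZMod m) = (n' : ZMod m) → f n = f n' := by
    intro n n' h
    rw [hf]
    dsimp only
    rw [rho_congr hu hζm h x,
      zeta_zpow_congr (i := -n * j) (j := -n' * j) hζ0 hζm (by push_cast; rw [h])]
  calc rho ζ hζ0 u a ((m : k)⁻¹ • ∑ i ∈ Finset.range m, f i)
      = (m : k)⁻¹ • ∑ i ∈ Finset.range m, rho ζ hζ0 u a (f i) := by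
        rw [map_smul, map_sum]
    _ = (m : k)⁻¹ • ∑ i ∈ Finset.range m, ζ ^ (a * j) • f (a + i) := by
        refine congrArg _ (Finset.sum_congr rfl fun i _ => ?_)
        rw [hf]
        dsimp only
        rw [map_smul, ← rho_add hu, smul_smul, ← zpow_add₀ hζ0]
        congr 2
        ring
    _ = ζ ^ (a * j) • ((m : k)⁻¹ • ∑ i ∈ Finset.range m, f (a + i)) := by
        rw [← Finset.smul_sum, smul_comm]
    _ = ζ ^ (a * j) • Qc m ζ hζ0 u j x := by rw [sum_shift hm f hper a]; rfl

theorem sum_Qc [CharZero k] (hm : 0 < m) (hζ : IsPrimitiveRoot ζ m)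
    (hu : IsCocycle m ζ hζ0 u) (x : LaurentPolynomial k ⊗[k] g) :
    ∑ j ∈ Finset.range m, Qc m ζ hζ0 u (j : ℤ) x = x := by
  have hmk : (m : k) ≠ 0 := Nat.cast_ne_zero.2 hm.ne'
  calc ∑ j ∈ Finset.range m, Qc m ζ hζ0 u (j : ℤ) x
      = (m : k)⁻¹ • ∑ j ∈ Finset.range m, ∑ i ∈ Finset.range m,
          ζ ^ (-(i : ℤ) * (j : ℤ)) • rho ζ hζ0 u i x := by
        rw [Finset.smul_sum]; rfl
    _ = (m : k)⁻¹ • ∑ i ∈ Finset.range m,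
          (∑ j ∈ Finset.range m, (ζ ^ (-(i : ℤ))) ^ (j : ℕ)) • rho ζ hζ0 u i x := by
        rw [Finset.sum_comm]
        refine congrArg _ (Finset.sum_congr rfl fun i _ => ?_)
        rw [Finset.sum_smul]
        refine Finset.sum_congr rfl fun j _ => ?_
        rw [← zpow_natCast (ζ ^ (-(i : ℤ))), ← zpow_mul]
    _ = (m : k)⁻¹ • ((m : k) • x) := by
        congr 1
        rw [Finset.sum_eq_single 0]
        · have h1 : ∑ j ∈ Finset.range m, (ζ ^ (-((0 : ℕ) : ℤ))) ^ (j : ℕ) = (m : k) := by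
            simp
          rw [h1]
          simp only [Nat.cast_zero]
          rw [rho_zero hu]
        · intro i hi hne
          have hilt := Finset.mem_range.1 hi
          have hipos : 0 < i := Nat.pos_of_ne_zero hne
          have hw1 : ζ ^ (-(i : ℤ)) ≠ 1 := by
            intro h1
            have h2 : ζ ^ ((i : ℤ)) = 1 := by
              rw [← inv_inj, ← zpow_neg, h1, inv_one]
            have := (hζ.zpow_eq_one_iff_dvd _).1 h2
            rw [Int.natCast_dvd_natCast] at this
            exact absurd (Nat.le_of_dvd hipos this) (not_le.2 hilt)
          have hwm : (ζ ^ (-(i : ℤ))) ^ m = 1 := by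
            rw [← zpow_natCast, ← zpow_mul, mul_comm, zpow_mul, zpow_natCast,
              hζ.pow_eq_one, one_zpow]
          rw [geom_zero hwm hw1, zero_smul]
        · intro h
          exact absurd (Finset.mem_range.2 hm) h
    _ = x := by rw [smul_smul, inv_mul_cancel₀ hmk, one_smul]

theorem Qc_T_smul (hu : IsCocycle m ζ hζ0 u) {v : LaurentPolynomial k ⊗[k] g}
    (hfix : ∀ i : ℤ, rho ζ hζ0 u i v = v) (j l : ℤ) :
    Qc m ζ hζ0 u l ((T j : LaurentPolynomial k) • v)
      = ((m : k)⁻¹ * ∑ i ∈ Finset.range m, (ζ ^ (j - l)) ^ (i : ℕ)) •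
          ((T j : LaurentPolynomial k) • v) := by
  rw [Qc_def]
  have h1 : ∀ i ∈ Finset.range m,
      ζ ^ (-(i : ℤ) * l) • rho ζ hζ0 u i ((T j : LaurentPolynomial k) • v)
        = (ζ ^ (j - l)) ^ (i : ℕ) • ((T j : LaurentPolynomial k) • v) := by
    intro i _
    rw [rho_T_smul hu, hfix, smul_smul, ← zpow_add₀ hζ0, ← zpow_natCast (ζ ^ (j - l)),
      ← zpow_mul]
    congr 2
    ring
  rw [Finset.sum_congr rfl h1, ← Finset.sum_smul, smul_smul]

theorem Qc_T_smul_eq (hζm : ζ ^ m = 1) [CharZero k] (hm : 0 < m)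
    (hu : IsCocycle m ζ hζ0 u) {v : LaurentPolynomial k ⊗[k] g}
    (hfix : ∀ i : ℤ, rho ζ hζ0 u i v = v) {j l : ℤ} (hjl : (j : ZMod m) = (l : ZMod m)) :
    Qc m ζ hζ0 u l ((T j : LaurentPolynomial k) • v) = (T j : LaurentPolynomial k) • v := by
  have hmk : (m : k) ≠ 0 := Nat.cast_ne_zero.2 hm.ne'
  rw [Qc_T_smul hu hfix]
  have hz : ζ ^ (j - l) = 1 := by
    have : ζ ^ (j - l) = ζ ^ (0 : ℤ) :=
      zeta_zpow_congr hζ0 hζm (by push_cast; rw [sub_eq_zero, hjl])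
    rwa [zpow_zero] at this
  rw [hz]
  simp [hmk]

theorem Qc_T_smul_ne (hζ : IsPrimitiveRoot ζ m) (hm : 0 < m)
    (hu : IsCocycle m ζ hζ0 u) {v : LaurentPolynomial k ⊗[k] g}
    (hfix : ∀ i : ℤ, rho ζ hζ0 u i v = v) {j l : ℤ} (hjl : (j : ZMod m) ≠ (l : ZMod m)) :
    Qc m ζ hζ0 u l ((T j : LaurentPolynomial k) • v) = 0 := by
  rw [Qc_T_smul hu hfix]
  have hw1 : ζ ^ (j - l) ≠ 1 := by
    intro h1
    have := (hζ.zpow_eq_one_iff_dvd _).1 h1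
    rw [← ZMod.intCast_zmod_eq_zero_iff_dvd] at this
    push_cast at this
    rw [sub_eq_zero] at this
    exact hjl this
  have hwm : (ζ ^ (j - l)) ^ m = 1 := by
    rw [← zpow_natCast, ← zpow_mul, mul_comm, zpow_mul, zpow_natCast, hζ.pow_eq_one, one_zpow]
  rw [geom_zero hwm hw1, mul_zero, zero_smul]

end Aux3
section Aux4

variable {k : Type*} [Field k] {g : Type*} [LieRing g] [LieAlgebra k g]

theorem T_mul_m_mem (m : ℕ) (q : ℤ) : (T ((m : ℤ) * q) : LaurentPolynomial k) ∈ Rsub k m := by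
  have h1 : (T (m : ℤ) : LaurentPolynomial k) ∈ Rsub k m :=
    Algebra.subset_adjoin (Set.mem_insert _ _)
  have h2 : (T (-(m : ℤ)) : LaurentPolynomial k) ∈ Rsub k m :=
    Algebra.subset_adjoin (Set.mem_insert_of_mem _ rfl)
  rcases le_or_gt 0 q with hq | hq
  · have : (T ((m : ℤ)) : LaurentPolynomial k) ^ q.toNat = T ((m : ℤ) * q) := by
      rw [T_pow]
      congr 1
      rw [mul_comm]
      congr 1
      exact Int.toNat_of_nonneg hq
    rw [← this]
    exact pow_mem h1 _
  · have : (T (-(m : ℤ)) : LaurentPolynomial k) ^ (-q).toNat = T ((m : ℤ) * q) := by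
      rw [T_pow]
      congr 1
      have : ((-q).toNat : ℤ) = -q := Int.toNat_of_nonneg (by omega)
      rw [this]
      ring
    rw [← this]
    exact pow_mem h2 _

theorem C_mul_T_mem (m : ℕ) (a : k) (q : ℤ) :
    (C a * T ((m : ℤ) * q) : LaurentPolynomial k) ∈ Rsub k m := by
  refine mul_mem ?_ (T_mul_m_mem m q)
  rw [C_eq_algebraMap]
  exact Subalgebra.algebraMap_mem _ _

theorem repr_tensor (m : ℕ) (hm : 0 < m)
    (F : Submodule ↥(Rsub k m) (LaurentPolynomial k ⊗[k] g))
    (w : LaurentPolynomial k ⊗[↥(Rsub k m)] ↥F) :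
    ∃ y : Fin m → ↥F,
      w = ∑ j : Fin m, (T ((j : ℕ) : ℤ) : LaurentPolynomial k) ⊗ₜ[↥(Rsub k m)] y j := by
  induction w using TensorProduct.induction_on with
  | zero =>
    refine ⟨0, ?_⟩
    simp [TensorProduct.tmul_zero]
  | tmul s v =>
    induction s using LaurentPolynomial.induction_on' with
    | add p q hp hq =>
      obtain ⟨y, hy⟩ := hp
      obtain ⟨y', hy'⟩ := hq
      refine ⟨y + y', ?_⟩
      rw [TensorProduct.add_tmul, hy, hy', ← Finset.sum_add_distrib]
      refine Finset.sum_congr rfl fun j _ => ?_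
      rw [Pi.add_apply, TensorProduct.tmul_add]
    | C_mul_T n a =>
      set q : ℤ := n / (m : ℤ) with hqdef
      set r : ℤ := n % (m : ℤ) with hrdef
      have hmz : (m : ℤ) ≠ 0 := by exact_mod_cast hm.ne'
      have hr0 : 0 ≤ r := Int.emod_nonneg n hmz
      have hrm : r < m := Int.emod_lt_of_pos n (by exact_mod_cast hm)
      have hn : n = (m : ℤ) * q + r := (Int.mul_ediv_add_emod n m).symm
      have hrn : (r.toNat : ℤ) = r := Int.toNat_of_nonneg hr0
      have hrnat : r.toNat < m := by omega
      set i0 : Fin m := ⟨r.toNat, hrnat⟩ with hi0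
      set rr : ↥(Rsub k m) := ⟨C a * T ((m : ℤ) * q), C_mul_T_mem m a q⟩ with hrr
      refine ⟨Pi.single i0 (rr • v), ?_⟩
      have hsplit : (C a * T n : LaurentPolynomial k)
          = rr • (T ((i0 : ℕ) : ℤ) : LaurentPolynomial k) := by
        rw [Subalgebra.smul_def, hrr]
        show C a * T n = (C a * T ((m : ℤ) * q)) • T (((i0 : ℕ) : ℤ))
        rw [smul_eq_mul, mul_assoc, ← T_add]
        congr 2
        show n = (m : ℤ) * q + ((r.toNat : ℕ) : ℤ)
        rw [hrn]
        exact hn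
      rw [hsplit, TensorProduct.smul_tmul]
      rw [Finset.sum_eq_single_of_mem i0 (Finset.mem_univ _)]
      · rw [Pi.single_eq_same]
      · intro b _ hb
        rw [Pi.single_eq_of_ne hb, TensorProduct.tmul_zero]
  | add p q hp hq =>
    obtain ⟨y, hy⟩ := hp
    obtain ⟨y', hy'⟩ := hq
    refine ⟨y + y', ?_⟩
    rw [hy, hy', ← Finset.sum_add_distrib]
    refine Finset.sum_congr rfl fun j _ => ?_
    rw [Pi.add_apply, TensorProduct.tmul_add]

theorem Qc_map_sum {m : ℕ} {ζ : k} {hζ0 : ζ ≠ 0}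
    {u : ℤ → ((LaurentPolynomial k ⊗[k] g) ≃ₗ[k] (LaurentPolynomial k ⊗[k] g))}
    {ι : Type*} (s : Finset ι) (f : ι → LaurentPolynomial k ⊗[k] g) (l : ℤ) :
    Qc m ζ hζ0 u l (∑ i ∈ s, f i) = ∑ i ∈ s, Qc m ζ hζ0 u l (f i) := by
  simp only [Qc_def, map_sum, Finset.smul_sum]
  exact Finset.sum_comm

theorem fin_cast_zmod_inj {m : ℕ} (hm : 0 < m) {a b : Fin m}
    (h : ((((a : ℕ) : ℤ)) : ZMod m) = ((((b : ℕ) : ℤ)) : ZMod m)) : a = b := by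
  haveI : NeZero m := ⟨hm.ne'⟩
  have h' : (((a : ℕ)) : ZMod m) = (((b : ℕ)) : ZMod m) := by
    push_cast at h ⊢
    exact h
  have := congrArg ZMod.val h'
  rw [ZMod.val_cast_of_lt a.isLt, ZMod.val_cast_of_lt b.isLt] at this
  exact Fin.ext this

end Aux4
section Aux5

variable {k : Type*} [Field k] [CharZero k] {g : Type*} [LieRing g] [LieAlgebra k g]
variable {m : ℕ} {ζ : k} {hζ0 : ζ ≠ 0}
  {u : ℤ → ((LaurentPolynomial k ⊗[k] g) ≃ₗ[k] (LaurentPolynomial k ⊗[k] g))}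

theorem Tneg_Qc_fixed (hm : 0 < m) (hζ : IsPrimitiveRoot ζ m) (hu : IsCocycle m ζ hζ0 u)
    (x : LaurentPolynomial k ⊗[k] g) (j a : ℤ) :
    rho ζ hζ0 u a ((T (-j) : LaurentPolynomial k) • Qc m ζ hζ0 u j x)
      = (T (-j) : LaurentPolynomial k) • Qc m ζ hζ0 u j x := by
  rw [rho_T_smul hu, rho_Qc hm hζ.pow_eq_one hu,
    smul_comm ((T (-j)) : LaurentPolynomial k), smul_smul, ← zpow_add₀ hζ0]
  have h : a * -j + a * j = 0 := by ring
  rw [h, zpow_zero, one_smul]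

theorem unique_decomp (hm : 0 < m) (hζ : IsPrimitiveRoot ζ m) (hu : IsCocycle m ζ hζ0 u)
    (y' : Fin m → LaurentPolynomial k ⊗[k] g)
    (hfix' : ∀ i : Fin m, ∀ a : ℤ, rho ζ hζ0 u a (y' i) = y' i) (l : Fin m) :
    y' l = (T (-((l : ℕ) : ℤ)) : LaurentPolynomial k) •
      Qc m ζ hζ0 u ((l : ℕ) : ℤ)
        (∑ i : Fin m, (T ((i : ℕ) : ℤ) : LaurentPolynomial k) • y' i) := by
  have hQ : Qc m ζ hζ0 u ((l : ℕ) : ℤ)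
      (∑ i : Fin m, (T ((i : ℕ) : ℤ) : LaurentPolynomial k) • y' i)
        = (T ((l : ℕ) : ℤ) : LaurentPolynomial k) • y' l := by
    rw [Qc_map_sum]
    rw [Finset.sum_eq_single_of_mem l (Finset.mem_univ _)]
    · exact Qc_T_smul_eq hζ.pow_eq_one hm hu (hfix' l) rfl
    · intro b _ hb
      exact Qc_T_smul_ne hζ hm hu (hfix' b) (fun h => hb (fin_cast_zmod_inj hm h))
  rw [hQ, smul_smul, ← T_add, neg_add_cancel, T_zero, one_smul]

end Aux5

/-- For a 1-cocycle `u` on `Γ` in `Aut_S(g(S))`, the fixed point set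
`g(S)_u` is an `R`-subalgebra of `g(S)`, every element of `g(S)` is uniquely of the
form `Σ_{i=0}^{m-1} z^i y_i` with `y_i ∈ g(S)_u`, and consequently the `S`-linear map
`S ⊗_R g(S)_u → g(S)`, `s ⊗ y ↦ s·y`, is an isomorphism of Lie algebras over `S`,
i.e. `g(S)_u` is an `S/R` form of `g(R)`. -/
theorem statement7 {k : Type*} [Field k] [CharZero k] {g : Type*} [LieRing g] [LieAlgebra k g]
    (m : ℕ) (hm : 0 < m) (ζ : k) (hζ : IsPrimitiveRoot ζ m)
    (u : ℤ → ((LaurentPolynomial k ⊗[k] g) ≃ₗ[k] (LaurentPolynomial k ⊗[k] g)))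
    (hu : IsCocycle m ζ (hζ.ne_zero hm.ne') u) :
    ((0 : LaurentPolynomial k ⊗[k] g) ∈ cocycleFixed ζ (hζ.ne_zero hm.ne') u ∧
      (∀ x ∈ cocycleFixed ζ (hζ.ne_zero hm.ne') u,
        ∀ y ∈ cocycleFixed ζ (hζ.ne_zero hm.ne') u,
          x + y ∈ cocycleFixed ζ (hζ.ne_zero hm.ne') u) ∧
      (∀ (c : k), ∀ x ∈ cocycleFixed ζ (hζ.ne_zero hm.ne') u,
        c • x ∈ cocycleFixed ζ (hζ.ne_zero hm.ne') u) ∧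
      (∀ r ∈ Rsub k m, ∀ x ∈ cocycleFixed ζ (hζ.ne_zero hm.ne') u,
        r • x ∈ cocycleFixed ζ (hζ.ne_zero hm.ne') u) ∧
      (∀ x ∈ cocycleFixed ζ (hζ.ne_zero hm.ne') u,
        ∀ y ∈ cocycleFixed ζ (hζ.ne_zero hm.ne') u,
          ⁅x, y⁆ ∈ cocycleFixed ζ (hζ.ne_zero hm.ne') u)) ∧
    (∀ x : LaurentPolynomial k ⊗[k] g,
      ∃! y : Fin m → LaurentPolynomial k ⊗[k] g,
        (∀ i, y i ∈ cocycleFixed ζ (hζ.ne_zero hm.ne') u) ∧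
          x = ∑ i : Fin m, ((T (i : ℤ) : LaurentPolynomial k) • y i)) ∧
    (∀ F : Submodule ↥(Rsub k m) (LaurentPolynomial k ⊗[k] g),
      (F : Set (LaurentPolynomial k ⊗[k] g)) = cocycleFixed ζ (hζ.ne_zero hm.ne') u →
        (∀ (s : LaurentPolynomial k) (y : ↥F),
          LinearMap.liftBaseChange (LaurentPolynomial k) F.subtype (s ⊗ₜ[↥(Rsub k m)] y)
            = s • (y : LaurentPolynomial k ⊗[k] g)) ∧
        Function.Bijective (LinearMap.liftBaseChange (LaurentPolynomial k) F.subtype)) := by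
  have hζ0 : ζ ≠ 0 := hζ.ne_zero hm.ne'
  have hζm : ζ ^ m = 1 := hζ.pow_eq_one
  -- closure properties
  have hzero : (0 : LaurentPolynomial k ⊗[k] g) ∈ cocycleFixed ζ (hζ.ne_zero hm.ne') u := by
    intro i
    rw [map_zero, map_zero]
  have hdecomp : ∀ x : LaurentPolynomial k ⊗[k] g,
      ∃! y : Fin m → LaurentPolynomial k ⊗[k] g,
        (∀ i, y i ∈ cocycleFixed ζ (hζ.ne_zero hm.ne') u) ∧
          x = ∑ i : Fin m, ((T (i : ℤ) : LaurentPolynomial k) • y i) := by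
    intro x
    refine ⟨fun i => (T (-((i : ℕ) : ℤ)) : LaurentPolynomial k) •
      Qc m ζ (hζ.ne_zero hm.ne') u ((i : ℕ) : ℤ) x, ⟨?_, ?_⟩, ?_⟩
    · intro i a
      exact Tneg_Qc_fixed hm hζ hu x ((i : ℕ) : ℤ) a
    · have h1 : ∀ i : Fin m, (T ((i : ℕ) : ℤ) : LaurentPolynomial k) •
          ((T (-((i : ℕ) : ℤ)) : LaurentPolynomial k) •
            Qc m ζ (hζ.ne_zero hm.ne') u ((i : ℕ) : ℤ) x)
            = Qc m ζ (hζ.ne_zero hm.ne') u ((i : ℕ) : ℤ) x := by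
        intro i
        rw [smul_smul, ← T_add, add_neg_cancel, T_zero, one_smul]
      rw [Finset.sum_congr rfl fun i _ => h1 i,
        Fin.sum_univ_eq_sum_range (fun n => Qc m ζ (hζ.ne_zero hm.ne') u (n : ℤ) x) m,
        sum_Qc hm hζ hu x]
    · intro y' hy'
      funext l
      have hfix' : ∀ i : Fin m, ∀ a : ℤ, rho ζ (hζ.ne_zero hm.ne') u a (y' i) = y' i :=
        fun i a => hy'.1 i a
      have h2 := unique_decomp hm hζ hu y' hfix' l
      rw [← hy'.2] at h2
      exact h2
  refine ⟨⟨hzero, ?_, ?_, ?_, ?_⟩, hdecomp, ?_⟩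
  · intro x hx y hy i
    rw [map_add, map_add, hx i, hy i]
  · intro c x hx i
    rw [map_smul, map_smul, hx i]
  · intro r hr x hx i
    show rho ζ (hζ.ne_zero hm.ne') u i (r • x) = r • x
    rw [rho_R_smul hu hζm i hr]
    exact congrArg _ (hx i)
  · intro x hx y hy i
    show rho ζ (hζ.ne_zero hm.ne') u i ⁅x, y⁆ = ⁅x, y⁆
    rw [rho_bracket hu i]
    exact congrArg₂ _ (hx i) (hy i)
  -- base change
  intro F hF
  refine ⟨fun s y => rfl, ?_, ?_⟩
  · intro a b hab
    obtain ⟨y, rfl⟩ := repr_tensor m hm F a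
    obtain ⟨y', rfl⟩ := repr_tensor m hm F b
    have hmap : ∀ z : Fin m → ↥F,
        LinearMap.liftBaseChange (LaurentPolynomial k) F.subtype
          (∑ j : Fin m, (T ((j : ℕ) : ℤ) : LaurentPolynomial k) ⊗ₜ[↥(Rsub k m)] z j)
            = ∑ j : Fin m, (T ((j : ℕ) : ℤ) : LaurentPolynomial k) •
              (z j : LaurentPolynomial k ⊗[k] g) := by
      intro z
      rw [map_sum]
      rfl
    rw [hmap y, hmap y'] at hab
    have hmem : ∀ (z : Fin m → ↥F) (j : Fin m),
        (z j : LaurentPolynomial k ⊗[k] g) ∈ cocycleFixed ζ (hζ.ne_zero hm.ne') u := by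
      intro z j
      rw [← hF]
      exact (z j).2
    have huniq := (hdecomp (∑ j : Fin m, (T ((j : ℕ) : ℤ) : LaurentPolynomial k) •
        (y j : LaurentPolynomial k ⊗[k] g))).unique ⟨hmem y, rfl⟩ ⟨hmem y', hab⟩
    have hyy : y = y' := funext fun j => Subtype.ext (congrFun huniq j)
    rw [hyy]
  · intro x
    obtain ⟨y, ⟨hyfix, hysum⟩, -⟩ := hdecomp x
    have hymem : ∀ j : Fin m, y j ∈ F := by
      intro j
      have : y j ∈ (F : Set (LaurentPolynomial k ⊗[k] g)) := by
        rw [hF]; exact hyfix j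
      exact this
    refine ⟨∑ j : Fin m, (T ((j : ℕ) : ℤ) : LaurentPolynomial k) ⊗ₜ[↥(Rsub k m)] ⟨y j, hymem j⟩, ?_⟩
    rw [map_sum]
    exact hysum.symm

end LoopPaper
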